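/- arXiv:1812.07084 — 2 statements merged into one kernel-verified Lean document; each statement's English description precedes it below -/
import Mathlib

section
/- Let D₁ be the (T·(n+m))-dimensional block matrix encoding one-step dynamics correction for linear dynamics x_{t+1} = A x_t + B u_t (fixing x₁ and all controls, and replacing each state x̃_{t+1} with A x_t + B u_t one step at a time). Then for any vector ξ (a concatenated state-control trajectory), the vector D₁^{T-1} ξ satisfies the dynamics: its state components x_t satisfy x_{t+1} = A x_t + B u_t for all t = 1, …, T-1. -/
/-- A stacked trajectory of horizon `T+1`: states `x₁,…,x_{T+1} ∈ ℝⁿ` and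
controls `u₁,…,u_T ∈ ℝᵐ`. -/
def Traj (n m T : ℕ) := (Fin (T + 1) → Fin n → ℝ) × (Fin T → Fin m → ℝ)

/-- The one-step dynamics consistency map `D₁` for linear dynamics
`x_{t+1} = A x_t + B u_t`: it fixes `x₁` and all controls, and replaces each
state block `x_{t+1}` by `A x_t + B u_t`. -/
def D1 {n m T : ℕ} (A : Matrix (Fin n) (Fin n) ℝ) (B : Matrix (Fin n) (Fin m) ℝ)
    (ξ : Traj n m T) : Traj n m T :=
  (Fin.cases (ξ.1 0) (fun t => A.mulVec (ξ.1 t.castSucc) + B.mulVec (ξ.2 t)), ξ.2)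

lemma D1_aux {n m T : ℕ} (A : Matrix (Fin n) (Fin n) ℝ) (B : Matrix (Fin n) (Fin m) ℝ)
    (ξ : Traj n m T) :
    ∀ k, ∀ t : Fin T, (t : ℕ) < k → ((D1 A B)^[k] ξ).1 t.succ =
      A.mulVec (((D1 A B)^[k] ξ).1 t.castSucc) + B.mulVec (((D1 A B)^[k] ξ).2 t) := by
  intro k
  induction k with
  | zero => intro t ht; omega
  | succ k ih =>
    intro t ht
    rw [Function.iterate_succ_apply']
    set η := (D1 A B)^[k] ξ with hη
    have h1 : (D1 A B η).1 t.succ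
        = A.mulVec (η.1 t.castSucc) + B.mulVec (η.2 t) := by
      simp [D1]
    have h2 : (D1 A B η).1 t.castSucc = η.1 t.castSucc := by
      rcases Nat.eq_zero_or_eq_succ_pred (t : ℕ) with h0 | hsucc
      · have : t.castSucc = 0 := by
          ext; simpa using h0
        rw [this]
        simp [D1]
      · have hj : (t : ℕ) - 1 < T := by omega
        set s : Fin T := ⟨(t : ℕ) - 1, hj⟩ with hs
        have hts : t.castSucc = s.succ := by
          ext; simp [hs]; omega
        rw [hts]
        have : (D1 A B η).1 s.succ
            = A.mulVec (η.1 s.castSucc) + B.mulVec (η.2 s) := by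
          simp [D1]
        rw [this, ← ih s (by simp [hs]; omega)]
    have h3 : (D1 A B η).2 = η.2 := rfl
    rw [h1, ← h2, h3]

/-- Applying `D₁` once per time step (i.e. `T` times for `T+1` states) to any
stacked trajectory vector yields a dynamically feasible trajectory. -/
theorem D1_iterate_feasible {n m T : ℕ}
    (A : Matrix (Fin n) (Fin n) ℝ) (B : Matrix (Fin n) (Fin m) ℝ)
    (ξ : Traj n m T) :
    ∀ t : Fin T, ((D1 A B)^[T] ξ).1 t.succ =
      A.mulVec (((D1 A B)^[T] ξ).1 t.castSucc) + B.mulVec (((D1 A B)^[T] ξ).2 t) := by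
  intro t
  exact D1_aux A B ξ T t t.isLt
end

section
/- Moreover, the matrix D₁ satisfies D₁^T = D₁^{T-1}, i.e., D₁ is eventually idempotent-like: applying it T-1 times reaches the fixed-point set, and D₁^{T-1} is a projection onto the eigenspace of D₁ with eigenvalue 1 in the sense that D₁ (D₁^{T-1} ξ) = D₁^{T-1} ξ for all ξ. -/
lemma D1_fst_zero {n m T : ℕ} (A : Matrix (Fin n) (Fin n) ℝ) (B : Matrix (Fin n) (Fin m) ℝ)
    (ξ : Traj n m T) : (D1 A B ξ).1 0 = ξ.1 0 := rfl

lemma D1_fst_succ {n m T : ℕ} (A : Matrix (Fin n) (Fin n) ℝ) (B : Matrix (Fin n) (Fin m) ℝ)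
    (ξ : Traj n m T) (t : Fin T) :
    (D1 A B ξ).1 t.succ = A.mulVec (ξ.1 t.castSucc) + B.mulVec (ξ.2 t) := by
  simp [D1]

lemma D1_snd {n m T : ℕ} (A : Matrix (Fin n) (Fin n) ℝ) (B : Matrix (Fin n) (Fin m) ℝ)
    (ξ : Traj n m T) : (D1 A B ξ).2 = ξ.2 := rfl

lemma D1_iter_snd {n m T : ℕ} (A : Matrix (Fin n) (Fin n) ℝ) (B : Matrix (Fin n) (Fin m) ℝ)
    (ξ : Traj n m T) (k : ℕ) : ((D1 A B)^[k] ξ).2 = ξ.2 := by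
  induction k with
  | zero => rfl
  | succ k ih => rw [Function.iterate_succ_apply', D1_snd, ih]

lemma D1_stab {n m T : ℕ} (A : Matrix (Fin n) (Fin n) ℝ) (B : Matrix (Fin n) (Fin m) ℝ)
    (ξ : Traj n m T) : ∀ k (j : Fin (T + 1)), j.val ≤ k →
    ((D1 A B)^[k + 1] ξ).1 j = ((D1 A B)^[k] ξ).1 j := by
  intro k
  induction k with
  | zero =>
    intro j hj
    have : j = 0 := Fin.ext (Nat.le_zero.mp hj)
    subst this
    rw [Function.iterate_one, D1_fst_zero]
    rfl
  | succ k ih =>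
    intro j hj
    refine Fin.cases ?_ ?_ j hj
    · intro _
      rw [Function.iterate_succ_apply' (D1 A B) (k+1), D1_fst_zero,
        Function.iterate_succ_apply' (D1 A B) k, D1_fst_zero]
    · intro t ht
      have ht' : (t : ℕ) ≤ k := by simpa using ht
      rw [Function.iterate_succ_apply' (D1 A B) (k+1), D1_fst_succ,
        Function.iterate_succ_apply' (D1 A B) k, D1_fst_succ,
        ← Function.iterate_succ_apply' (D1 A B) k, D1_iter_snd, D1_iter_snd,
        ih t.castSucc (by simpa using ht')]

/-- `D₁` applied one more time after `T` iterations changes nothing: `D₁^{T+1} = D₁^T`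
on every vector, i.e. `D₁^T` projects onto the eigenvalue-1 eigenspace of `D₁`. -/
theorem D1_iterate_projection {n m T : ℕ}
    (A : Matrix (Fin n) (Fin n) ℝ) (B : Matrix (Fin n) (Fin m) ℝ)
    (ξ : Traj n m T) :
    D1 A B ((D1 A B)^[T] ξ) = (D1 A B)^[T] ξ ∧
      (D1 A B)^[T + 1] ξ = (D1 A B)^[T] ξ := by
  have key : (D1 A B)^[T + 1] ξ = (D1 A B)^[T] ξ := by
    apply Prod.ext
    · funext j
      exact D1_stab A B ξ T j (Nat.lt_succ_iff.mp j.isLt)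
    · rw [D1_iter_snd, D1_iter_snd]
  exact ⟨(Function.iterate_succ_apply' (D1 A B) T ξ).symm.trans key, key⟩
end
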